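/- In a Cartesian closed category with an initial object f and a contravariant involutive negation functor sending t to f (so that Hom(A,B) ≅ Hom(¬(A⇒B), f) naturally), every hom-set Hom(A,B) has at most one element; i.e., the category is a preorder. -/

import Mathlib

open CategoryTheory CategoryTheory.Limits CategoryTheory.MonoidalCategory

/-- Joyal's collapse: a cartesian closed category with an initial object `⊥`,
a contravariant involutive negation functor `N` sending the terminal object
(the monoidal unit of the cartesian structure) to `⊥`, together with a natural
bijection `Hom(A,B) ≅ Hom(N(A⇒B), ⊥)`, is a preorder: every hom-set has at most
one element. -/
theorem stmt0 {C : Type*} [Category C] [CartesianMonoidalCategory C] [MonoidalClosed C]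
    [HasInitial C]
    (N : Cᵒᵖ ⥤ C)
    (invol : 𝟭 C ≅ N.rightOp ⋙ N)
    (Nt : N.obj (Opposite.op (𝟙_ C)) ≅ ⊥_ C)
    (e : ∀ A B : C, (A ⟶ B) ≃ (N.obj (Opposite.op ((ihom A).obj B)) ⟶ ⊥_ C))
    (e_nat : ∀ {A B B' : C} (f : A ⟶ B) (g : B ⟶ B'),
      e A B' (f ≫ g) = N.map ((ihom A).map g).op ≫ e A B f) :
    ∀ A B : C, Subsingleton (A ⟶ B) := by
  intro A B
  constructor
  intro f g
  apply (e A B).injective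
  set u := e A B f with hu
  set v := e A B g with hv
  have : IsIso u := inferInstance
  have h : inv u ≫ u = inv u ≫ v := initial.hom_ext _ _
  calc u = u ≫ inv u ≫ u := by simp
    _ = u ≫ inv u ≫ v := by rw [h]
    _ = v := by simp
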